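/- Let g be a tree on n vertices rooted at a vertex of maximum degree that maximizes s(g) = ∑_{(i,j)∈E} dᵢdⱼ among all trees with the given degree sequence. If u and v are vertices with d_u > d_v, then v cannot be a strict ancestor (upstream vertex) of u. -/

import Mathlib

open Finset

/-- The s-metric `s(g) = ∑_{(i,j)∈E} dᵢdⱼ` of a graph. -/
def sMetric {n : ℕ} (G : SimpleGraph (Fin n)) [DecidableRel G.Adj] : ℕ :=
  ∑ e ∈ G.edgeFinset,
    Sym2.lift ⟨fun i j => G.degree i * G.degree j, fun _ _ => mul_comm _ _⟩ e

namespace StmtTwelveAux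

open SimpleGraph Walk

variable {V : Type*}

/-- Transfer reachability along a map of adjacency to reachability. -/
lemma reachable_transfer {G H : SimpleGraph V}
    (hadj : ∀ a b : V, G.Adj a b → H.Reachable a b) {x y : V}
    (h : G.Reachable x y) : H.Reachable x y := by
  obtain ⟨w⟩ := h
  induction w with
  | nil => exact Reachable.refl _
  | cons h p ih => exact (hadj _ _ h).trans ih

/-- Deleting a non-bridge edge keeps the graph connected and removes exactly one edge. -/
lemma delete_nonbridge {G : SimpleGraph V} {a b : V} (hab : G.Adj a b)
    (hbr : ¬ G.IsBridge s(a, b)) (hc : G.Connected) :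
    (G \ SimpleGraph.fromEdgeSet {s(a, b)}).Connected ∧
    (G \ SimpleGraph.fromEdgeSet {s(a, b)}).edgeSet = G.edgeSet \ {s(a, b)} := by
  rw [isBridge_iff] at hbr
  push_neg at hbr
  have hreach : (G \ SimpleGraph.fromEdgeSet {s(a, b)}).Reachable a b := hbr
  constructor
  · haveI := hc.nonempty
    refine SimpleGraph.Connected.mk fun x y => reachable_transfer ?_ (hc.preconnected x y)
    intro x y hxy
    by_cases he : s(x, y) = s(a, b)
    · rw [Sym2.eq_iff] at he
      rcases he with ⟨rfl, rfl⟩ | ⟨rfl, rfl⟩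
      · exact hreach
      · exact hreach.symm
    · refine Adj.reachable ?_
      rw [sdiff_adj, fromEdgeSet_adj]
      exact ⟨hxy, fun h => he h.1⟩
  · rw [edgeSet_sdiff, edgeSet_fromEdgeSet]
    ext e
    simp only [Set.mem_diff, Set.mem_singleton_iff, Set.mem_setOf_eq, not_and, not_not]
    constructor
    · rintro ⟨he, h2⟩
      refine ⟨he, fun h => ?_⟩
      exact absurd (h2 h) (G.not_isDiag_of_mem_edgeSet he)
    · rintro ⟨he, hne⟩
      exact ⟨he, fun h => absurd h hne⟩

variable [Fintype V] [DecidableEq V]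

/-- A connected graph has at least `card V - 1` edges. -/
lemma card_le_edgeFinset :
    ∀ (m : ℕ) (G : SimpleGraph V) [Fintype G.edgeSet], G.edgeFinset.card = m → G.Connected →
      Fintype.card V ≤ m + 1 := by
  intro m
  induction m using Nat.strong_induction_on with
  | _ m ih =>
    intro G _ hm hconn
    by_cases hac : G.IsAcyclic
    · have h := SimpleGraph.IsTree.card_edgeFinset ⟨hconn, hac⟩
      omega
    · rw [isAcyclic_iff_forall_edge_isBridge] at hac
      push_neg at hac
      obtain ⟨e, heE, hbr⟩ := hac
      induction e using Sym2.ind with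
      | _ a b =>
        rw [SimpleGraph.mem_edgeSet] at heE
        obtain ⟨hHconn, hHE⟩ := delete_nonbridge heE hbr hconn
        set H := G \ SimpleGraph.fromEdgeSet {s(a, b)} with hH
        letI : DecidableRel H.Adj := Classical.decRel _
        have hmem : s(a, b) ∈ G.edgeFinset := by rwa [mem_edgeFinset, SimpleGraph.mem_edgeSet]
        have hHfin : H.edgeFinset = G.edgeFinset.erase s(a, b) := by
          ext f
          simp only [mem_edgeFinset, hHE, Set.mem_diff, Set.mem_singleton_iff,
            Finset.mem_erase]
          tauto
        have hm0 : 0 < m := by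
          rw [← hm]
          exact Finset.card_pos.mpr ⟨_, hmem⟩
        have hHcard : H.edgeFinset.card = m - 1 := by
          rw [hHfin, Finset.card_erase_of_mem hmem, hm]
        have := ih (m - 1) (by omega) H hHcard hHconn
        omega

/-- A connected graph with `card V - 1` edges is a tree. -/
lemma isTree_of_connected_card (G : SimpleGraph V) [Fintype G.edgeSet]
    (hconn : G.Connected) (hcard : G.edgeFinset.card + 1 = Fintype.card V) : G.IsTree := by
  refine ⟨hconn, ?_⟩
  by_contra hac
  rw [isAcyclic_iff_forall_edge_isBridge] at hac
  push_neg at hac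
  obtain ⟨e, heE, hbr⟩ := hac
  induction e using Sym2.ind with
  | _ a b =>
    rw [SimpleGraph.mem_edgeSet] at heE
    obtain ⟨hHconn, hHE⟩ := delete_nonbridge heE hbr hconn
    set H := G \ SimpleGraph.fromEdgeSet {s(a, b)} with hH
    letI : DecidableRel H.Adj := Classical.decRel _
    have hmem : s(a, b) ∈ G.edgeFinset := by rwa [mem_edgeFinset, SimpleGraph.mem_edgeSet]
    have hHfin : H.edgeFinset = G.edgeFinset.erase s(a, b) := by
      ext f
      simp only [mem_edgeFinset, hHE, Set.mem_diff, Set.mem_singleton_iff, Finset.mem_erase]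
      tauto
    have hm0 : 0 < G.edgeFinset.card := Finset.card_pos.mpr ⟨_, hmem⟩
    have hHcard : H.edgeFinset.card = G.edgeFinset.card - 1 := by
      rw [hHfin, Finset.card_erase_of_mem hmem]
    have := card_le_edgeFinset (G.edgeFinset.card - 1) H hHcard hHconn
    omega

/-- In a tree, every path between two vertices has length the distance. -/
lemma tree_length_eq_dist {G : SimpleGraph V} (hT : G.IsTree) {a b : V}
    (p : G.Walk a b) (hp : p.IsPath) : p.length = G.dist a b := by
  obtain ⟨q, hq, hlen⟩ :=
    SimpleGraph.Reachable.exists_path_of_dist (((isTree_iff _).mp hT).1.preconnected a b)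
  have huniq := ((isTree_iff _).mp hT).2.path_unique ⟨p, hp⟩ ⟨q, hq⟩
  rw [← hlen]
  exact congrArg Walk.length (congrArg Subtype.val huniq)

end StmtTwelveAux

section Surgery

open SimpleGraph Walk StmtTwelveAux

/-- The edge-swap surgery: exchange edges `{y,z}, {c,s}` for `{c,z}, {y,s}`. This keeps the
graph a tree with the same degree sequence and strictly increases the s-metric when
`deg y < deg c` and `deg s < deg z`. -/
lemma surgery {n : ℕ} (G : SimpleGraph (Fin n)) [DecidableRel G.Adj] (hT : G.IsTree)
    {c s y z : Fin n}
    (hcs : G.Adj c s) (hyz : G.Adj y z) (hcz : ¬ G.Adj c z) (hys : ¬ G.Adj y s)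
    (hcy : c ≠ y) (hcz' : c ≠ z) (hsy : s ≠ y) (hsz : s ≠ z)
    (w : G.Walk c y) (hw1 : s(c, s) ∉ w.edges) (hw2 : s(y, z) ∉ w.edges)
    (h1 : G.degree y < G.degree c) (h2 : G.degree s < G.degree z) :
    ∃ (G' : SimpleGraph (Fin n)) (_ : DecidableRel G'.Adj), G'.IsTree ∧
      (∀ i, G'.degree i = G.degree i) ∧ sMetric G < sMetric G' := by
  classical
  have hcs' : c ≠ s := hcs.ne
  have hyz' : y ≠ z := hyz.ne
  have hyc := hcy.symm
  have hzc := hcz'.symm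
  have hys' := hsy.symm
  have hzs := hsz.symm
  have hsc := hcs'.symm
  have hzy := hyz'.symm
  obtain ⟨G', hG'⟩ : ∃ H : SimpleGraph (Fin n),
      H = SimpleGraph.fromEdgeSet ((G.edgeSet \ {s(y, z), s(c, s)}) ∪ {s(c, z), s(y, s)}) :=
    ⟨_, rfl⟩
  letI instG' : DecidableRel G'.Adj := Classical.decRel _
  have hadj : ∀ a b : Fin n, G'.Adj a b ↔
      ((G.Adj a b ∧ s(a, b) ≠ s(y, z) ∧ s(a, b) ≠ s(c, s)) ∨
        s(a, b) = s(c, z) ∨ s(a, b) = s(y, s)) := by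
    intro a b
    rw [hG', fromEdgeSet_adj]
    simp only [Set.mem_union, Set.mem_diff, Set.mem_insert_iff, Set.mem_singleton_iff,
      SimpleGraph.mem_edgeSet]
    constructor
    · rintro ⟨⟨hGe, hne⟩ | (h | h), hab⟩
      · exact Or.inl ⟨hGe, by tauto, by tauto⟩
      · exact Or.inr (Or.inl h)
      · exact Or.inr (Or.inr h)
    · rintro (⟨hGe, hne1, hne2⟩ | h | h)
      · exact ⟨Or.inl ⟨hGe, by tauto⟩, hGe.ne⟩
      · refine ⟨Or.inr (Or.inl h), fun hab => ?_⟩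
        subst hab
        rw [Sym2.eq_iff] at h
        rcases h with ⟨rfl, heq⟩ | ⟨rfl, heq⟩
        · exact hcz' heq
        · exact hcz' heq.symm
      · refine ⟨Or.inr (Or.inr h), fun hab => ?_⟩
        subst hab
        rw [Sym2.eq_iff] at h
        rcases h with ⟨rfl, heq⟩ | ⟨rfl, heq⟩
        · exact hys' heq
        · exact hsy heq
  -- degrees are preserved
  have hdeg : ∀ i, G'.degree i = G.degree i := by
    intro x
    by_cases hxc : x = c
    · subst hxc
      have hnb : G'.neighborFinset x = insert z ((G.neighborFinset x).erase s) := by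
        ext b
        simp only [ne_eq, mem_neighborFinset, hadj, Sym2.eq_iff, Finset.mem_insert, Finset.mem_erase,
          hcy, hcz', hcs', false_and, and_false, false_or, or_false, true_and, and_true,
          eq_self_iff_true, not_false_eq_true]
        tauto
      rw [degree, hnb, Finset.card_insert_of_notMem, Finset.card_erase_of_mem, degree]
      · have : 0 < (G.neighborFinset x).card := Finset.card_pos.mpr
          ⟨s, by rwa [mem_neighborFinset]⟩
        omega
      · rwa [mem_neighborFinset]
      · simp only [Finset.mem_erase, mem_neighborFinset]
        rintro ⟨-, h⟩
        exact hcz h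
    · by_cases hxs : x = s
      · subst hxs
        have hnb : G'.neighborFinset x = insert y ((G.neighborFinset x).erase c) := by
          ext b
          simp only [ne_eq, mem_neighborFinset, hadj, Sym2.eq_iff, Finset.mem_insert, Finset.mem_erase,
            hsy, hsz, hsc, false_and, and_false, false_or, or_false, true_and, and_true,
            eq_self_iff_true, not_false_eq_true]
          tauto
        rw [degree, hnb, Finset.card_insert_of_notMem, Finset.card_erase_of_mem, degree]
        · have : 0 < (G.neighborFinset x).card := Finset.card_pos.mpr
            ⟨c, by rw [mem_neighborFinset]; exact hcs.symm⟩
          omega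
        · rw [mem_neighborFinset]; exact hcs.symm
        · simp only [Finset.mem_erase, mem_neighborFinset]
          rintro ⟨-, h⟩
          exact hys h.symm
      · by_cases hxy : x = y
        · subst hxy
          have hnb : G'.neighborFinset x = insert s ((G.neighborFinset x).erase z) := by
            ext b
            simp only [ne_eq, mem_neighborFinset, hadj, Sym2.eq_iff, Finset.mem_insert,
              Finset.mem_erase, hyc, hyz', hys', false_and, and_false, false_or, or_false,
              true_and, and_true, eq_self_iff_true, not_false_eq_true]
            tauto
          rw [degree, hnb, Finset.card_insert_of_notMem, Finset.card_erase_of_mem, degree]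
          · have : 0 < (G.neighborFinset x).card := Finset.card_pos.mpr
              ⟨z, by rwa [mem_neighborFinset]⟩
            omega
          · rwa [mem_neighborFinset]
          · simp only [Finset.mem_erase, mem_neighborFinset]
            rintro ⟨-, h⟩
            exact hys h
        · by_cases hxz : x = z
          · subst hxz
            have hnb : G'.neighborFinset x = insert c ((G.neighborFinset x).erase y) := by
              ext b
              simp only [ne_eq, mem_neighborFinset, hadj, Sym2.eq_iff, Finset.mem_insert,
                Finset.mem_erase, hzy, hzc, hzs, false_and, and_false, false_or, or_false,
                true_and, and_true, eq_self_iff_true, not_false_eq_true]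
              tauto
            rw [degree, hnb, Finset.card_insert_of_notMem, Finset.card_erase_of_mem, degree]
            · have : 0 < (G.neighborFinset x).card := Finset.card_pos.mpr
                ⟨y, by rw [mem_neighborFinset]; exact hyz.symm⟩
              omega
            · rw [mem_neighborFinset]; exact hyz.symm
            · simp only [Finset.mem_erase, mem_neighborFinset]
              rintro ⟨-, h⟩
              exact hcz h.symm
          · have hnb : G'.neighborFinset x = G.neighborFinset x := by
              ext b
              simp only [ne_eq, mem_neighborFinset, hadj, Sym2.eq_iff, hxc, hxs, hxy, hxz,
                false_and, and_false, false_or, or_false, true_and, and_true,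
                eq_self_iff_true, not_false_eq_true]
            rw [degree, hnb, degree]
  -- the edge finset
  have hmyz : s(y, z) ∈ G.edgeFinset := by rwa [mem_edgeFinset, SimpleGraph.mem_edgeSet]
  have hmcs : s(c, s) ∈ G.edgeFinset := by rwa [mem_edgeFinset, SimpleGraph.mem_edgeSet]
  have hne_cs_yz : s(c, s) ≠ s(y, z) := by
    simp only [ne_eq, Sym2.eq_iff]
    rintro (⟨ha, -⟩ | ⟨ha, -⟩)
    · exact hcy ha
    · exact hcz' ha
  have hne_cz_ys : s(c, z) ≠ s(y, s) := by
    simp only [ne_eq, Sym2.eq_iff]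
    rintro (⟨ha, -⟩ | ⟨ha, -⟩)
    · exact hcy ha
    · exact hcs' ha
  have hcz_notmem : s(c, z) ∉ G.edgeFinset := by
    rw [mem_edgeFinset, SimpleGraph.mem_edgeSet]; exact hcz
  have hys_notmem : s(y, s) ∉ G.edgeFinset := by
    rw [mem_edgeFinset, SimpleGraph.mem_edgeSet]; exact hys
  have hEfin : G'.edgeFinset =
      insert s(c, z) (insert s(y, s) ((G.edgeFinset.erase s(y, z)).erase s(c, s))) := by
    ext e
    simp only [mem_edgeFinset, hG', edgeSet_fromEdgeSet, Set.mem_diff, Set.mem_union,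
      Set.mem_insert_iff, Set.mem_singleton_iff, Set.mem_setOf_eq, Finset.mem_insert,
      Finset.mem_erase, mem_edgeFinset]
    constructor
    · rintro ⟨⟨he, hne⟩ | (h | h), hdiag⟩
      · right; right
        exact ⟨by tauto, by tauto, he⟩
      · exact Or.inl h
      · exact Or.inr (Or.inl h)
    · rintro (rfl | rfl | ⟨hne1, hne2, he⟩)
      · refine ⟨Or.inr (Or.inl rfl), ?_⟩
        simp [Sym2.isDiag_iff_proj_eq, hcz']
      · refine ⟨Or.inr (Or.inr rfl), ?_⟩
        simp [Sym2.isDiag_iff_proj_eq, hys']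
      · exact ⟨Or.inl ⟨he, by tauto⟩, G.not_isDiag_of_mem_edgeSet he⟩
  have hmcs' : s(c, s) ∈ G.edgeFinset.erase s(y, z) :=
    Finset.mem_erase.mpr ⟨hne_cs_yz, hmcs⟩
  have hcz_not2 : s(c, z) ∉ insert s(y, s) ((G.edgeFinset.erase s(y, z)).erase s(c, s)) := by
    simp only [Finset.mem_insert, Finset.mem_erase]
    push_neg
    exact ⟨hne_cz_ys, fun _ _ => hcz_notmem⟩
  have hys_not2 : s(y, s) ∉ (G.edgeFinset.erase s(y, z)).erase s(c, s) := by
    simp only [Finset.mem_erase]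
    push_neg
    intro _ _
    exact hys_notmem
  have hcard2 : 2 ≤ G.edgeFinset.card :=
    Finset.one_lt_card.mpr ⟨_, hmyz, _, hmcs, hne_cs_yz.symm⟩
  have hEcard : G'.edgeFinset.card = G.edgeFinset.card := by
    rw [hEfin, Finset.card_insert_of_notMem hcz_not2, Finset.card_insert_of_notMem hys_not2,
      Finset.card_erase_of_mem hmcs', Finset.card_erase_of_mem hmyz]
    omega
  -- connectivity
  have hG'cz : G'.Adj c z := (hadj _ _).mpr (Or.inr (Or.inl rfl))
  have hG'ys : G'.Adj y s := (hadj _ _).mpr (Or.inr (Or.inr rfl))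
  have hwtrans : ∀ e ∈ w.edges, e ∈ G'.edgeSet := by
    intro e he
    have heG := w.edges_subset_edgeSet he
    rw [hG', edgeSet_fromEdgeSet]
    refine ⟨Or.inl ⟨heG, ?_⟩, G.not_isDiag_of_mem_edgeSet heG⟩
    simp only [Set.mem_insert_iff, Set.mem_singleton_iff]
    rintro (rfl | rfl)
    · exact hw2 he
    · exact hw1 he
  have hw' : G'.Reachable c y := (w.transfer G' hwtrans).reachable
  have hpre : ∀ a b : Fin n, G.Adj a b → G'.Reachable a b := by
    intro a b hab
    by_cases e1 : s(a, b) = s(y, z)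
    · have hyzR : G'.Reachable y z := (hw'.symm).trans hG'cz.reachable
      rw [Sym2.eq_iff] at e1
      rcases e1 with ⟨rfl, rfl⟩ | ⟨rfl, rfl⟩
      · exact hyzR
      · exact hyzR.symm
    · by_cases e2 : s(a, b) = s(c, s)
      · have hcsR : G'.Reachable c s := hw'.trans hG'ys.reachable
        rw [Sym2.eq_iff] at e2
        rcases e2 with ⟨rfl, rfl⟩ | ⟨rfl, rfl⟩
        · exact hcsR
        · exact hcsR.symm
      · exact Adj.reachable (by rw [hadj]; exact Or.inl ⟨hab, e1, e2⟩)
  have hG'conn : G'.Connected := by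
    haveI := hT.isConnected.nonempty
    exact SimpleGraph.Connected.mk fun a b =>
      reachable_transfer hpre (hT.isConnected.preconnected a b)
  have hG'tree : G'.IsTree := by
    refine isTree_of_connected_card G' hG'conn ?_
    rw [hEcard]
    exact hT.card_edgeFinset
  -- the s-metric increases
  refine ⟨G', instG', hG'tree, hdeg, ?_⟩
  have hs1 : sMetric G' = ∑ e ∈ G'.edgeFinset,
      Sym2.lift ⟨fun i j => G.degree i * G.degree j, fun _ _ => mul_comm _ _⟩ e := by
    unfold sMetric
    refine Finset.sum_congr rfl fun e _ => ?_
    induction e using Sym2.ind with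
    | _ i j => simp [hdeg]
  have hs2 : sMetric G = ∑ e ∈ G.edgeFinset,
      Sym2.lift ⟨fun i j => G.degree i * G.degree j, fun _ _ => mul_comm _ _⟩ e := rfl
  set F : Sym2 (Fin n) → ℕ :=
    Sym2.lift ⟨fun i j => G.degree i * G.degree j, fun _ _ => mul_comm _ _⟩ with hF
  have hsum1 : sMetric G' = F s(c, z) + F s(y, s) +
      ∑ e ∈ (G.edgeFinset.erase s(y, z)).erase s(c, s), F e := by
    rw [hs1, hEfin, Finset.sum_insert hcz_not2, Finset.sum_insert hys_not2]
    ring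
  have hsum2 : sMetric G = F s(y, z) + F s(c, s) +
      ∑ e ∈ (G.edgeFinset.erase s(y, z)).erase s(c, s), F e := by
    rw [hs2, ← Finset.add_sum_erase _ F hmyz, ← Finset.add_sum_erase _ F hmcs']
    ring
  rw [hsum1, hsum2]
  have hFcz : F s(c, z) = G.degree c * G.degree z := by simp [hF]
  have hFys : F s(y, s) = G.degree y * G.degree s := by simp [hF]
  have hFyz : F s(y, z) = G.degree y * G.degree z := by simp [hF]
  have hFcs : F s(c, s) = G.degree c * G.degree s := by simp [hF]
  rw [hFcz, hFys, hFyz, hFcs]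
  have key : G.degree y * G.degree z + G.degree c * G.degree s <
      G.degree c * G.degree z + G.degree y * G.degree s := by
    obtain ⟨p, hp⟩ := Nat.exists_eq_add_of_lt h1
    obtain ⟨q, hq⟩ := Nat.exists_eq_add_of_lt h2
    have hrw : (G.degree y + p + 1) * (G.degree s + q + 1) + G.degree y * G.degree s
        = (G.degree y * (G.degree s + q + 1) + (G.degree y + p + 1) * G.degree s)
          + (p * q + p + q + 1) := by ring
    rw [hp, hq, hrw]
    exact Nat.lt_add_of_pos_right (Nat.succ_pos _)
  exact Nat.add_lt_add_right key _

end Surgery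

theorem stmt_12 (n : ℕ) (G : SimpleGraph (Fin n)) [DecidableRel G.Adj]
    (hT : G.IsTree)
    (hmax : ∀ (G' : SimpleGraph (Fin n)) [DecidableRel G'.Adj], G'.IsTree →
      (∀ i, G'.degree i = G.degree i) → sMetric G' ≤ sMetric G)
    (r : Fin n) (hr : ∀ i, G.degree i ≤ G.degree r)
    (u v : Fin n) (huv : G.degree v < G.degree u) :
    ¬ ∃ p : G.Walk u r, p.IsPath ∧ v ≠ u ∧ v ∈ p.support := by
  classical
  rintro ⟨p0, hp0, hvu, hvmem⟩
  have hac : G.IsAcyclic := ((SimpleGraph.isTree_iff _).mp hT).2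
  -- the set of "violators": vertices having a strictly smaller-degree strict ancestor
  set Vio : Finset (Fin n) := Finset.univ.filter (fun x =>
    ∃ q : G.Walk x r, q.IsPath ∧ ∃ w ∈ q.support, w ≠ x ∧ G.degree w < G.degree x) with hVio
  have huVio : u ∈ Vio :=
    Finset.mem_filter.mpr ⟨Finset.mem_univ _, ⟨p0, hp0, v, hvmem, hvu, huv⟩⟩
  obtain ⟨u₀, hu₀V, hu₀max⟩ := Finset.exists_max_image (α := ℕ) Vio (fun x => G.degree x) ⟨u, huVio⟩
  set M := G.degree u₀ with hM
  have hMr : M ≤ G.degree r := hr u₀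
  set Cand : Finset (Fin n) := Vio.filter (fun x => G.degree x = M) with hCand
  obtain ⟨c, hcC, hcmax⟩ := Finset.exists_max_image Cand (fun x => G.dist x r)
    ⟨u₀, Finset.mem_filter.mpr ⟨hu₀V, rfl⟩⟩
  have hcV : c ∈ Vio := (Finset.mem_filter.mp hcC).1
  have hdc : G.degree c = M := (Finset.mem_filter.mp hcC).2
  obtain ⟨P, hP, w₀, hw₀mem, hw₀ne, hw₀deg⟩ :=
    (Finset.mem_filter.mp hcV).2
  rw [hdc] at hw₀deg
  -- `w₀` has positive degree, hence `M ≥ 2`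
  have hw₀r : w₀ ≠ r := fun h => by rw [h] at hw₀deg; omega
  have hw₀pos : 0 < G.degree w₀ := by
    have hB₀len : 0 < (P.dropUntil w₀ hw₀mem).length := by
      rcases Nat.eq_zero_or_pos (P.dropUntil w₀ hw₀mem).length with h0 | h
      · exact absurd (SimpleGraph.Walk.eq_of_length_eq_zero h0) hw₀r
      · exact h
    have hadj₀ := (P.dropUntil w₀ hw₀mem).adj_getVert_succ (i := 0) hB₀len
    rw [SimpleGraph.Walk.getVert_zero] at hadj₀
    exact (G.degree_pos_iff_exists_adj w₀).mpr ⟨_, hadj₀⟩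
  have hM2 : 2 ≤ M := by omega
  have hcr : c ≠ r := by
    intro h
    subst h
    rw [(SimpleGraph.Walk.isPath_iff_eq_nil (p := P)).mp hP] at hw₀mem
    simp only [SimpleGraph.Walk.support_nil, List.mem_singleton] at hw₀mem
    exact hw₀ne hw₀mem
  have hPlen : 0 < P.length := by
    rcases Nat.eq_zero_or_pos P.length with h0 | h
    · exact absurd (SimpleGraph.Walk.eq_of_length_eq_zero h0) hcr
    · exact h
  -- choose `y`: a small-degree vertex on `P` closest to `r`
  set S : Finset (Fin n) := P.support.toFinset.filter (fun w => G.degree w < M) with hS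
  have hw₀S : w₀ ∈ S :=
    Finset.mem_filter.mpr ⟨List.mem_toFinset.mpr hw₀mem, hw₀deg⟩
  obtain ⟨y, hyS, hymin⟩ := Finset.exists_min_image S
    (fun w => if h : w ∈ P.support then (P.dropUntil w h).length else 0) ⟨w₀, hw₀S⟩
  have hymem : y ∈ P.support := List.mem_toFinset.mp (Finset.mem_filter.mp hyS).1
  have hdy : G.degree y < M := (Finset.mem_filter.mp hyS).2
  have hy_ne_c : y ≠ c := fun h => by rw [h, hdc] at hdy; omega
  have hy_ne_r : y ≠ r := fun h => by rw [h] at hdy; omega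
  set B := P.dropUntil y hymem with hB
  set A := P.takeUntil y hymem with hA
  have hABspec : A.append B = P := P.take_spec hymem
  have hBpath : B.IsPath := hP.dropUntil hymem
  have hApath : A.IsPath := hP.takeUntil hymem
  have hBlen : 0 < B.length := by
    rcases Nat.eq_zero_or_pos B.length with h0 | h
    · exact absurd (SimpleGraph.Walk.eq_of_length_eq_zero h0) hy_ne_r
    · exact h
  set z := B.getVert 1 with hz
  have hyzadj : G.Adj y z := by
    have := B.adj_getVert_succ (i := 0) hBlen
    rwa [SimpleGraph.Walk.getVert_zero] at this
  have hz_ne_y : z ≠ y := hyzadj.ne'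
  have hzB : z ∈ B.support :=
    SimpleGraph.Walk.mem_support_iff_exists_getVert.mpr ⟨1, rfl, hBlen⟩
  have hzP : z ∈ P.support := P.support_dropUntil_subset hymem hzB
  -- minimality of `y` gives `M ≤ deg z`
  have hdzM : M ≤ G.degree z := by
    by_contra hlt
    push_neg at hlt
    have hzS : z ∈ S := Finset.mem_filter.mpr ⟨List.mem_toFinset.mpr hzP, hlt⟩
    have hle := hymin z hzS
    replace hle : B.length ≤ (P.dropUntil z hzP).length := by
      simpa [dif_pos hymem, dif_pos hzP] using hle
    have huniq := hac.path_unique ⟨P.dropUntil z hzP, hP.dropUntil hzP⟩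
      ⟨B.dropUntil z hzB, hBpath.dropUntil hzB⟩
    have hlen1 : (P.dropUntil z hzP).length = (B.dropUntil z hzB).length :=
      congrArg SimpleGraph.Walk.length (Subtype.mk_eq_mk.mp huniq)
    have hsplit : (B.takeUntil z hzB).length + (B.dropUntil z hzB).length = B.length := by
      have := congrArg SimpleGraph.Walk.length (B.take_spec hzB)
      rwa [SimpleGraph.Walk.length_append] at this
    have htpos : 0 < (B.takeUntil z hzB).length := by
      rcases Nat.eq_zero_or_pos (B.takeUntil z hzB).length with h0 | h
      · exact absurd (SimpleGraph.Walk.eq_of_length_eq_zero h0).symm hz_ne_y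
      · exact h
    omega
  -- `c` is not on `B`
  have hnodup : P.support.Nodup := hP.support_nodup
  have hsplitsup : P.support = A.support ++ B.support.tail := by
    rw [← hABspec]
    exact SimpleGraph.Walk.support_append A B
  rw [hsplitsup] at hnodup
  have hdisj := List.disjoint_of_nodup_append hnodup
  have hcB : c ∉ B.support := by
    intro hmem
    rw [B.support_eq_cons, List.mem_cons] at hmem
    rcases hmem with h | h
    · exact hy_ne_c.symm h
    · exact hdisj A.start_mem_support h
  have hc_ne_z : c ≠ z := fun h => hcB (h ▸ hzB)
  have hztail : z ∈ B.support.tail := by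
    have := hzB
    rw [B.support_eq_cons, List.mem_cons] at this
    rcases this with h | h
    · exact absurd h hz_ne_y
    · exact h
  have hzA : z ∉ A.support := fun h => hdisj h hztail
  -- the parent of `c` and a child `s` of `c`
  set pc := P.getVert 1 with hpc
  have hpcadj : G.Adj c pc := by
    have := P.adj_getVert_succ (i := 0) hPlen
    rwa [SimpleGraph.Walk.getVert_zero] at this
  have hNerase : 0 < ((G.neighborFinset c).erase pc).card := by
    rw [Finset.card_erase_of_mem ((SimpleGraph.mem_neighborFinset G c pc).mpr hpcadj),
      G.card_neighborFinset_eq_degree, hdc]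
    omega
  obtain ⟨s, hs⟩ := Finset.card_pos.mp hNerase
  have hs_ne_pc : s ≠ pc := (Finset.mem_erase.mp hs).1
  have hcs : G.Adj c s := (SimpleGraph.mem_neighborFinset G c s).mp (Finset.mem_erase.mp hs).2
  have hsP : s ∉ P.support := by
    intro hmem
    have hW1path : (SimpleGraph.Walk.cons hcs SimpleGraph.Walk.nil).IsPath := by
      rw [SimpleGraph.Walk.cons_isPath_iff]
      exact ⟨SimpleGraph.Walk.IsPath.nil, by simp [hcs.ne]⟩
    have huniq := hac.path_unique ⟨P.takeUntil s hmem, hP.takeUntil hmem⟩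
      ⟨SimpleGraph.Walk.cons hcs SimpleGraph.Walk.nil, hW1path⟩
    have hPeq : P = SimpleGraph.Walk.cons hcs (P.dropUntil s hmem) := by
      conv_lhs => rw [← P.take_spec hmem]
      rw [Subtype.mk_eq_mk.mp huniq]
      simp [SimpleGraph.Walk.cons_append]
    have hpcs : pc = s := by
      rw [hpc, hPeq, SimpleGraph.Walk.getVert_cons_succ, SimpleGraph.Walk.getVert_zero]
    exact hs_ne_pc hpcs.symm
  have hs_ne_y : s ≠ y := fun h => hsP (h ▸ hymem)
  have hs_ne_z : s ≠ z := fun h => hsP (h ▸ hzP)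
  by_cases hcase : G.degree s < M
  · -- surgery case
    have hczadj : ¬ G.Adj c z := by
      intro h
      have hB'path : (B.dropUntil z hzB).IsPath := hBpath.dropUntil hzB
      have hcB' : c ∉ (B.dropUntil z hzB).support :=
        fun hm => hcB (B.support_dropUntil_subset hzB hm)
      have hW2path : (SimpleGraph.Walk.cons h (B.dropUntil z hzB)).IsPath := by
        rw [SimpleGraph.Walk.cons_isPath_iff]
        exact ⟨hB'path, hcB'⟩
      have huniq := hac.path_unique ⟨P, hP⟩
        ⟨SimpleGraph.Walk.cons h (B.dropUntil z hzB), hW2path⟩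
      have hyW2 : y ∈ (SimpleGraph.Walk.cons h (B.dropUntil z hzB)).support := by
        rw [← Subtype.mk_eq_mk.mp huniq]
        exact hymem
      rw [SimpleGraph.Walk.support_cons, List.mem_cons] at hyW2
      rcases hyW2 with h' | h'
      · exact hy_ne_c h'
      · have hBsplit : B.support = (B.takeUntil z hzB).support ++
            (B.dropUntil z hzB).support.tail := by
          conv_lhs => rw [← B.take_spec hzB]
          exact SimpleGraph.Walk.support_append _ _
        have hBnodup := hBpath.support_nodup
        rw [hBsplit] at hBnodup
        have hBdisj := List.disjoint_of_nodup_append hBnodup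
        rw [(B.dropUntil z hzB).support_eq_cons, List.mem_cons] at h'
        rcases h' with h' | h'
        · exact hz_ne_y h'.symm
        · exact hBdisj (B.takeUntil z hzB).start_mem_support h'
    have hysadj : ¬ G.Adj y s := by
      intro h
      have hW2path : (SimpleGraph.Walk.cons hcs
          (SimpleGraph.Walk.cons h.symm SimpleGraph.Walk.nil)).IsPath := by
        rw [SimpleGraph.Walk.cons_isPath_iff, SimpleGraph.Walk.cons_isPath_iff]
        refine ⟨⟨SimpleGraph.Walk.IsPath.nil, by simp [hs_ne_y]⟩, ?_⟩
        simp only [SimpleGraph.Walk.support_cons, SimpleGraph.Walk.support_nil,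
          List.mem_cons, List.mem_singleton, not_or]
        exact ⟨hcs.ne, fun hcy' => (hy_ne_c hcy'.symm).elim, by simp⟩
      have huniq := hac.path_unique ⟨A, hApath⟩
        ⟨SimpleGraph.Walk.cons hcs (SimpleGraph.Walk.cons h.symm SimpleGraph.Walk.nil), hW2path⟩
      have hsA : s ∈ A.support := by
        rw [Subtype.mk_eq_mk.mp huniq]
        simp
      exact hsP (P.support_takeUntil_subset hymem hsA)
    have hw1 : s(c, s) ∉ A.edges :=
      fun h => hsP (P.support_takeUntil_subset hymem (A.snd_mem_support_of_mem_edges h))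
    have hw2 : s(y, z) ∉ A.edges := fun h => hzA (A.snd_mem_support_of_mem_edges h)
    have h1 : G.degree y < G.degree c := by rw [hdc]; exact hdy
    have h2 : G.degree s < G.degree z := lt_of_lt_of_le hcase hdzM
    obtain ⟨G', instG', htree, hdegeq, hlt⟩ := surgery G hT hcs hyzadj hczadj hysadj
      (hy_ne_c.symm) hc_ne_z hs_ne_y hs_ne_z A hw1 hw2 h1 h2
    exact absurd (@hmax G' instG' htree hdegeq) (not_le.mpr hlt)
  · -- otherwise `s` is a violator of maximal degree farther from the root
    push_neg at hcase
    have hP' : (SimpleGraph.Walk.cons hcs.symm P).IsPath := by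
      rw [SimpleGraph.Walk.cons_isPath_iff]
      exact ⟨hP, hsP⟩
    have hsVio : s ∈ Vio := by
      refine Finset.mem_filter.mpr ⟨Finset.mem_univ _,
        ⟨SimpleGraph.Walk.cons hcs.symm P, hP', w₀, ?_, ?_, ?_⟩⟩
      · rw [SimpleGraph.Walk.support_cons, List.mem_cons]
        exact Or.inr hw₀mem
      · exact fun h => hsP (h ▸ hw₀mem)
      · exact lt_of_lt_of_le hw₀deg hcase
    have hdsM : G.degree s = M := le_antisymm (hu₀max s hsVio) hcase
    have hsCand : s ∈ Cand := Finset.mem_filter.mpr ⟨hsVio, hdsM⟩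
    have hd1 : P.length = G.dist c r := StmtTwelveAux.tree_length_eq_dist hT P hP
    have hd2 : P.length + 1 = G.dist s r := by
      have := StmtTwelveAux.tree_length_eq_dist hT _ hP'
      rwa [SimpleGraph.Walk.length_cons] at this
    have := hcmax s hsCand
    omega
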